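/- arXiv:0812.4264 — 3 statements merged into one kernel-verified Lean document; each statement's English description precedes it below -/
import Mathlib

section
/- A non-abelian free group F_n (n ≥ 2) has no non-trivial finitely generated normal subgroup of infinite index. -/
open FreeGroup

namespace Stmt1Aux
noncomputable section

variable {G : Type*} [Group G]

/-- The semidirect product `G ⋉ ℤ[G]` realized as pairs, used to define Fox derivatives. -/
structure P (G : Type*) [Group G] where
  g : G
  a : MonoidAlgebra ℤ G

namespace P

instance : Mul (P G) :=
  ⟨fun p q => ⟨p.g * q.g, p.a + MonoidAlgebra.single p.g 1 * q.a⟩⟩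
instance : One (P G) := ⟨⟨1, 0⟩⟩
instance : Inv (P G) :=
  ⟨fun p => ⟨p.g⁻¹, -(MonoidAlgebra.single p.g⁻¹ 1 * p.a)⟩⟩

@[simp] lemma mul_def (p q : P G) :
    p * q = ⟨p.g * q.g, p.a + MonoidAlgebra.single p.g 1 * q.a⟩ := rfl
@[simp] lemma one_def : (1 : P G) = ⟨1, 0⟩ := rfl
@[simp] lemma inv_def (p : P G) :
    p⁻¹ = ⟨p.g⁻¹, -(MonoidAlgebra.single p.g⁻¹ 1 * p.a)⟩ := rfl

instance : Group (P G) where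
  mul_assoc p q r := by
    have h : MonoidAlgebra.single (p.g * q.g) (1:ℤ) =
        MonoidAlgebra.single p.g 1 * MonoidAlgebra.single q.g 1 := by
      rw [MonoidAlgebra.single_mul_single, mul_one]
    show P.mk ((p.g * q.g) * r.g)
        ((p.a + MonoidAlgebra.single p.g 1 * q.a) + MonoidAlgebra.single (p.g * q.g) 1 * r.a)
      = P.mk (p.g * (q.g * r.g))
        (p.a + MonoidAlgebra.single p.g 1 * (q.a + MonoidAlgebra.single q.g 1 * r.a))
    rw [mul_assoc, h, mul_assoc, mul_add, add_assoc]
  one_mul p := by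
    have h : MonoidAlgebra.single (1:G) (1:ℤ) = 1 := (MonoidAlgebra.one_def).symm
    show P.mk (1 * p.g) (0 + MonoidAlgebra.single (1:G) 1 * p.a) = p
    rw [one_mul, zero_add, h, one_mul]
  mul_one p := by
    show P.mk (p.g * 1) (p.a + MonoidAlgebra.single p.g 1 * 0) = p
    rw [mul_one, mul_zero, add_zero]
  inv_mul_cancel p := by
    show P.mk (p.g⁻¹ * p.g)
        (-(MonoidAlgebra.single p.g⁻¹ 1 * p.a) + MonoidAlgebra.single p.g⁻¹ 1 * p.a) = 1
    rw [inv_mul_cancel, neg_add_cancel]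
    rfl

end P

variable {n : ℕ} (π : FreeGroup (Fin n) →* G) (i : Fin n)

/-- The Magnus-type homomorphism recording the `i`-th Fox derivative. -/
def Phi : FreeGroup (Fin n) →* P G :=
  FreeGroup.lift fun j => ⟨π (FreeGroup.of j), if j = i then 1 else 0⟩

/-- the `i`-th Fox derivative, composed with `π`. -/
def d (w : FreeGroup (Fin n)) : MonoidAlgebra ℤ G := (Phi π i w).a

lemma Phi_g (w : FreeGroup (Fin n)) : (Phi π i w).g = π w := by
  have : (⟨⟨P.g, rfl⟩, fun _ _ => rfl⟩ : P G →* G).comp (Phi π i) = π := by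
    apply FreeGroup.ext_hom
    intro a
    simp [Phi]
  exact DFunLike.congr_fun this w

lemma d_mul (u v : FreeGroup (Fin n)) :
    d π i (u * v) = d π i u + MonoidAlgebra.single (π u) 1 * d π i v := by
  unfold d
  rw [(Phi π i).map_mul, P.mul_def, ← Phi_g π i u]

lemma d_inv (u : FreeGroup (Fin n)) :
    d π i u⁻¹ = -(MonoidAlgebra.single (π u)⁻¹ 1 * d π i u) := by
  unfold d
  rw [(Phi π i).map_inv, P.inv_def, ← Phi_g π i u]

lemma d_one : d π i (1 : FreeGroup (Fin n)) = 0 := by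
  unfold d; rw [(Phi π i).map_one]; rfl

lemma d_of (j : Fin n) : d π i (FreeGroup.of j) = if j = i then 1 else 0 := by
  unfold d Phi
  rw [FreeGroup.lift_apply_of]

lemma d_mul_of_eq_one (u v : FreeGroup (Fin n)) (hu : π u = 1) :
    d π i (u * v) = d π i u + d π i v := by
  rw [d_mul, hu, ← MonoidAlgebra.one_def, one_mul]

lemma d_inv_of_eq_one (u : FreeGroup (Fin n)) (hu : π u = 1) :
    d π i u⁻¹ = -d π i u := by
  rw [d_inv, hu, inv_one, ← MonoidAlgebra.one_def, one_mul]

lemma d_conj (u g : FreeGroup (Fin n)) (hu : π u = 1) :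
    d π i (g * u * g⁻¹) = MonoidAlgebra.single (π g) 1 * d π i u := by
  have h1 : d π i (g * u) = d π i g + MonoidAlgebra.single (π g) 1 * d π i u := d_mul π i g u
  have h2 : d π i ((g * u) * g⁻¹)
      = d π i (g * u) + MonoidAlgebra.single (π (g * u)) 1 * d π i g⁻¹ := d_mul π i (g*u) g⁻¹
  have h3 : π (g * u) = π g := by rw [π.map_mul, hu, mul_one]
  have h4 : d π i g + MonoidAlgebra.single (π g) 1 * d π i g⁻¹ = 0 := by
    rw [← d_mul π i g g⁻¹, mul_inv_cancel, d_one]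
  rw [h2, h1, h3]
  have h5 : MonoidAlgebra.single (π g) 1 * d π i g⁻¹ = -d π i g :=
    eq_neg_of_add_eq_zero_right h4
  rw [h5]
  abel


/-! ### Words -/

/-- the letter `a` as a group element -/
def el {α : Type*} (a : α × Bool) : FreeGroup α := cond a.2 (FreeGroup.of a.1) (FreeGroup.of a.1)⁻¹

lemma mk_singleton {α : Type*} (a : α × Bool) : FreeGroup.mk [a] = el a := by
  obtain ⟨x, b⟩ := a
  cases b
  · show FreeGroup.mk [(x, false)] = (FreeGroup.of x)⁻¹
    have : (FreeGroup.mk [(x, true)])⁻¹ = FreeGroup.mk [(x, false)] := by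
      rw [FreeGroup.inv_mk]
      simp [FreeGroup.invRev]
    exact this.symm
  · rfl

lemma mk_cons {α : Type*} (a : α × Bool) (L : List (α × Bool)) :
    FreeGroup.mk (a :: L) = el a * FreeGroup.mk L := by
  rw [← mk_singleton, FreeGroup.mul_mk, List.singleton_append]

/-- the no-cancellation relation: `b` is not the inverse letter of `a`. -/
def NR {α : Type*} (a b : α × Bool) : Prop := ¬(b.1 = a.1 ∧ b.2 = !a.2)

lemma reduce_eq_self_of_chain' {α : Type*} [DecidableEq α] {L : List (α × Bool)}
    (h : List.Chain' NR L) : FreeGroup.reduce L = L := by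
  induction L with
  | nil => rfl
  | cons a L ih =>
    have hL : List.Chain' NR L := h.tail
    rw [FreeGroup.reduce.cons, ih hL]
    cases L with
    | nil => rfl
    | cons b T =>
      have hab : NR a b := (List.isChain_cons_cons.1 h).1
      show (if a.1 = b.1 ∧ a.2 = !b.2 then T else a :: b :: T) = a :: b :: T
      rw [if_neg]
      rintro ⟨h1, h2⟩
      exact hab ⟨h1.symm, by rw [h2, Bool.not_not]⟩

lemma chain'_of_reduce_eq_self {α : Type*} [DecidableEq α] {L : List (α × Bool)}
    (h : FreeGroup.reduce L = L) : List.Chain' NR L := by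
  induction L with
  | nil => exact List.isChain_nil
  | cons a L ih =>
    rw [FreeGroup.reduce.cons] at h
    cases hr : FreeGroup.reduce L with
    | nil =>
      rw [hr] at h
      have h' : [a] = a :: L := h
      have : L = [] := by injection h' with _ h2; exact h2.symm
      subst this
      exact List.isChain_singleton _
    | cons b T =>
      rw [hr] at h
      have h' : (if a.1 = b.1 ∧ a.2 = !b.2 then T else a :: b :: T) = a :: L := h
      by_cases hc : a.1 = b.1 ∧ a.2 = !b.2
      · exfalso
        rw [if_pos hc] at h'
        have h1 : T.length = L.length + 1 := by rw [h']; simp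
        have h2 : (FreeGroup.reduce L).length ≤ L.length :=
          FreeGroup.Red.length_le (FreeGroup.reduce.red (L := L))
        rw [hr] at h2
        simp at h2
        omega
      · rw [if_neg hc] at h'
        have hL : L = b :: T := by injection h' with _ h2; exact h2.symm
        rw [hL] at ih ⊢
        refine List.isChain_cons_cons.2 ⟨?_, ih (by rw [← hL, hr, hL])⟩
        rintro ⟨h1, h2⟩
        exact hc ⟨h1.symm, by rw [h2, Bool.not_not]⟩


variable (π : FreeGroup (Fin n) →* G) (i : Fin n) in
/-- the `j`-th summand of the Fox derivative of a word. -/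
def term (L : List (Fin n × Bool)) (j : ℕ) : MonoidAlgebra ℤ G :=
  match L.drop j with
  | [] => 0
  | a :: _ =>
    if a.1 = i then
      (if a.2 then MonoidAlgebra.single (π (FreeGroup.mk (L.take j))) 1
       else -MonoidAlgebra.single (π (FreeGroup.mk (L.take (j+1)))) 1)
    else 0

lemma term_zero_cons (a : Fin n × Bool) (L : List (Fin n × Bool)) :
    term π i (a :: L) 0 =
      if a.1 = i then
        (if a.2 then MonoidAlgebra.single (π (1 : FreeGroup (Fin n))) 1
         else -MonoidAlgebra.single (π (el a)) 1)
      else 0 := by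
  show (if a.1 = i then
      (if a.2 then MonoidAlgebra.single (π (FreeGroup.mk [])) 1
       else -MonoidAlgebra.single (π (FreeGroup.mk [a])) 1)
    else 0) = _
  rw [mk_singleton, ← FreeGroup.one_eq_mk]

lemma term_succ_cons (a : Fin n × Bool) (L : List (Fin n × Bool)) (j : ℕ) :
    term π i (a :: L) (j + 1) = MonoidAlgebra.single (π (el a)) 1 * term π i L j := by
  have hs : ∀ x y : G, MonoidAlgebra.single (x * y) (1:ℤ)
      = MonoidAlgebra.single x 1 * MonoidAlgebra.single y 1 := fun x y => by
    rw [MonoidAlgebra.single_mul_single, mul_one]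
  unfold term
  rw [List.drop_succ_cons]
  cases hd : L.drop j with
  | nil => simp
  | cons b rest =>
    simp only []
    by_cases h1 : b.1 = i
    · rw [if_pos h1, if_pos h1]
      by_cases h2 : b.2
      · rw [if_pos h2, if_pos h2, List.take_succ_cons, mk_cons, _root_.map_mul, hs]
      · rw [if_neg h2, if_neg h2, List.take_succ_cons, mk_cons, _root_.map_mul, hs, mul_neg]
    · rw [if_neg h1, if_neg h1, mul_zero]

lemma d_el (a : Fin n × Bool) :
    d π i (el a) = if a.1 = i then
      (if a.2 then 1 else -MonoidAlgebra.single (π (el a)) 1) else 0 := by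
  obtain ⟨x, b⟩ := a
  cases b
  · show d π i (FreeGroup.of x)⁻¹ = _
    rw [d_inv, d_of]
    by_cases hx : x = i
    · simp only [if_pos hx, mul_one]
      show _ = -MonoidAlgebra.single (π ((FreeGroup.of x)⁻¹)) 1
      rw [π.map_inv]
    · simp [hx]
  · show d π i (FreeGroup.of x) = _
    rw [d_of]
    by_cases hx : x = i <;> simp [hx]

lemma d_mk_eq_sum (L : List (Fin n × Bool)) :
    d π i (FreeGroup.mk L) = ∑ j ∈ Finset.range L.length, term π i L j := by
  have hone : MonoidAlgebra.single (1:G) (1:ℤ) = 1 := (MonoidAlgebra.one_def).symm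
  induction L with
  | nil =>
    show d π i (FreeGroup.mk []) = _
    rw [← FreeGroup.one_eq_mk, d_one]
    simp
  | cons a L ih =>
    rw [mk_cons, d_mul, ih, Finset.mul_sum, List.length_cons, Finset.sum_range_succ']
    have h0 : term π i (a :: L) 0 = d π i (el a) := by
      rw [term_zero_cons, d_el, π.map_one, hone]

    rw [h0, add_comm]
    congr 1
    exact Finset.sum_congr rfl fun j _ => (term_succ_cons π i a L j).symm

/-! ### Minimal elements -/

lemma mem_seg {n : ℕ} {N : Subgroup (FreeGroup (Fin n))} {u₀ : FreeGroup (Fin n)}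
    (hmin : ∀ v ∈ N, v ≠ 1 → u₀.toWord.length ≤ v.toWord.length)
    {a b : ℕ} (hab : a ≤ b) (hbk : b ≤ u₀.toWord.length)
    (hmem : (FreeGroup.mk (u₀.toWord.take a))⁻¹ * FreeGroup.mk (u₀.toWord.take b) ∈ N) :
    a = b ∨ (a = 0 ∧ b = u₀.toWord.length) := by
  set w := u₀.toWord with hw
  set seg := (w.take b).drop a with hseg
  have hid : FreeGroup.mk (w.take a) * FreeGroup.mk seg = FreeGroup.mk (w.take b) := by
    rw [FreeGroup.mul_mk]
    congr 1
    conv_rhs => rw [← List.take_append_drop a (w.take b)]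
    rw [List.take_take, min_eq_left hab]
  have hseg_mem : FreeGroup.mk seg ∈ N := by
    have h2 : FreeGroup.mk seg = (FreeGroup.mk (w.take a))⁻¹ * FreeGroup.mk (w.take b) := by
      rw [← hid]; group
    rw [h2]; exact hmem
  have hinfix : seg <:+: w :=
    ((List.drop_suffix a (w.take b)).isInfix).trans ((List.take_prefix b w).isInfix)
  have hredw : FreeGroup.reduce w = w := FreeGroup.reduce_toWord u₀
  have hred : FreeGroup.reduce seg = seg :=
    reduce_eq_self_of_chain' ((chain'_of_reduce_eq_self hredw).infix hinfix)
  have hlen_seg : seg.length = b - a := by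
    rw [hseg, List.length_drop, List.length_take, min_eq_left hbk]
  rcases eq_or_ne seg [] with h | h
  · left
    have h0 : b - a = 0 := by rw [← hlen_seg, h]; rfl
    omega
  · right
    have hne1 : FreeGroup.mk seg ≠ 1 := by
      intro hcon
      apply h
      have h3 := congrArg FreeGroup.toWord hcon
      rwa [FreeGroup.toWord_mk, hred, FreeGroup.toWord_one] at h3
    have h4 := hmin _ hseg_mem hne1
    rw [FreeGroup.toWord_mk, hred, hlen_seg] at h4
    omega

lemma exists_d_ne_zero {n : ℕ} (N : Subgroup (FreeGroup (Fin n))) [hN : N.Normal]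
    (u₀ : FreeGroup (Fin n)) (hu₀ : u₀ ∈ N) (hne : u₀ ≠ 1)
    (hmin : ∀ v ∈ N, v ≠ 1 → u₀.toWord.length ≤ v.toWord.length) :
    ∃ i : Fin n, d (QuotientGroup.mk' N) i u₀ ≠ 0 := by
  set π := QuotientGroup.mk' N with hπ
  have hwne : u₀.toWord ≠ [] := fun h => hne (FreeGroup.toWord_eq_nil_iff.1 h)
  obtain ⟨a₀, t, hwc⟩ : ∃ a t, u₀.toWord = a :: t := by
    cases hwx : u₀.toWord with
    | nil => exact absurd hwx hwne
    | cons a t => exact ⟨a, t, rfl⟩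
  obtain ⟨i, b₁⟩ := a₀
  refine ⟨i, ?_⟩
  set w := u₀.toWord with hw
  set k := w.length with hk
  have hkt : k = t.length + 1 := by rw [hk, hwc]; rfl
  have hk0 : 0 < k := by omega
  have hwlen : u₀.toWord.length = k := rfl
  have hmem_of_eq : ∀ a b : ℕ, π (FreeGroup.mk (w.take a)) = π (FreeGroup.mk (w.take b)) →
      (FreeGroup.mk (w.take a))⁻¹ * FreeGroup.mk (w.take b) ∈ N := by
    intro a b hab
    rw [← QuotientGroup.eq_one_iff (N := N)]
    push_cast
    show π ((FreeGroup.mk (w.take a))⁻¹ * FreeGroup.mk (w.take b)) = 1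
    rw [π.map_mul, π.map_inv, hab, inv_mul_cancel]
  -- the evaluation point
  set γ₀ : FreeGroup (Fin n) ⧸ N := if b₁ then 1 else π (el (i, false)) with hγ₀
  have htake1 : w.take 1 = [(i, b₁)] := by rw [hwc]; rfl
  have hγ₀' : γ₀ = if b₁ then π (FreeGroup.mk (w.take 0)) else π (FreeGroup.mk (w.take 1)) := by
    cases b₁
    · simp [hγ₀, htake1, mk_singleton]
    · simp [hγ₀, htake1, List.take_zero, ← FreeGroup.one_eq_mk]
  -- sum formula
  have hd_eq : d π i u₀ = ∑ j ∈ Finset.range k, term π i w j := by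
    conv_lhs => rw [← FreeGroup.mk_toWord (x := u₀)]
    exact d_mk_eq_sum π i w
  intro hzero
  have happ : (∑ j ∈ Finset.range k, term π i w j).coeff γ₀ = 0 := by
    rw [← hd_eq, hzero]; rfl
  -- each term vanishes except j = 0
  have hvanish : ∀ j ∈ Finset.range k, j ≠ 0 → (term π i w j).coeff γ₀ = 0 := by
    intro j hj hj0
    rw [Finset.mem_range] at hj
    cases hdrop : w.drop j with
    | nil =>
      exfalso
      rw [List.drop_eq_nil_iff] at hdrop
      omega
    | cons c rest =>
      have hterm : term π i w j = if c.1 = i then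
          (if c.2 then MonoidAlgebra.single (π (FreeGroup.mk (w.take j))) 1
           else -MonoidAlgebra.single (π (FreeGroup.mk (w.take (j+1)))) 1)
          else 0 := by
        unfold term
        rw [hdrop]
      by_cases hc1 : c.1 = i
      · by_cases hc2 : c.2 = true
        · -- positive letter at j : show π (mk (take j)) ≠ γ₀
          rw [hterm, if_pos hc1, if_pos hc2]
          rw [MonoidAlgebra.coeff_single]
          apply Finsupp.single_eq_of_ne'
          intro heq
          cases hb : b₁
          · -- γ₀ = π (mk (take 1)); membership of segment (1, j)
            rw [hb] at hγ₀'
            simp only [if_neg Bool.false_ne_true] at hγ₀'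
            rw [hγ₀'] at heq
            have hmem := hmem_of_eq 1 j heq.symm
            rcases mem_seg hmin (by omega) (by omega) hmem with h | h
            · -- j = 1 : adjacent inverse pair, contradicting reducedness
              have hj1 : j = 1 := h.symm
              subst hj1
              rw [hwc] at hdrop
              have ht : t = c :: rest := hdrop
              have hch : List.Chain' NR w := chain'_of_reduce_eq_self (FreeGroup.reduce_toWord u₀)
              rw [hwc, ht] at hch
              have hnr : NR ((i, b₁) : Fin n × Bool) c := (List.isChain_cons_cons.1 hch).1
              rw [hb] at hnr
              exact hnr ⟨hc1, by simp [hc2]⟩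
            · exact absurd h.1 one_ne_zero
          · -- γ₀ = 1 = π (mk (take 0))
            rw [hb] at hγ₀'
            simp only [if_pos rfl] at hγ₀'
            rw [hγ₀'] at heq
            have hmem := hmem_of_eq 0 j heq.symm
            rcases mem_seg hmin (by omega) (le_of_lt hj) hmem with h | h
            · omega
            · obtain ⟨-, h2⟩ := h
              omega
        · -- negative letter at j
          rw [hterm, if_pos hc1, if_neg hc2]
          rw [MonoidAlgebra.coeff_neg, Finsupp.neg_apply, neg_eq_zero]
          rw [MonoidAlgebra.coeff_single]
          apply Finsupp.single_eq_of_ne'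
          intro heq
          cases hb : b₁
          · -- γ₀ = π (mk (take 1)); segment (1, j+1)
            rw [hb] at hγ₀'
            simp only [if_neg Bool.false_ne_true] at hγ₀'
            rw [hγ₀'] at heq
            have hmem := hmem_of_eq 1 (j+1) heq.symm
            rcases mem_seg hmin (by omega) (by omega) hmem with h | h
            · omega
            · exact absurd h.1 one_ne_zero
          · -- γ₀ = 1 : only possible if j + 1 = k, the cyclically-reduced case
            rw [hb] at hγ₀'
            simp only [if_pos rfl] at hγ₀'
            rw [hγ₀'] at heq
            have hmem := hmem_of_eq 0 (j+1) heq.symm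
            rcases mem_seg hmin (by omega) (by omega) hmem with h | h
            · omega
            · -- j + 1 = k : last letter is (i, false), first is (i, true)
              obtain ⟨-, hjk⟩ := h
              have hjt : j = t.length := by omega
              -- rest = []
              have hrest : rest = [] := by
                have hlen := congrArg List.length hdrop
                rw [List.length_drop, List.length_cons] at hlen
                have hkk : w.length = k := rfl
                have hr0 : rest.length = 0 := by omega
                exact List.length_eq_zero_iff.1 hr0
              have hcfalse : c.2 = false := by
                cases hcc : c.2
                · rfl
                · exact absurd hcc hc2
              -- v := (of i)⁻¹ * u₀ * of i is a shorter nontrivial element of N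
              have hveq : (FreeGroup.of i)⁻¹ * u₀ * FreeGroup.of i
                  = FreeGroup.mk (t.take (t.length - 1)) := by
                have hu₀w : u₀ = FreeGroup.mk w := (FreeGroup.mk_toWord).symm
                have htne : t ≠ [] := by
                  intro hte
                  rw [hte] at hjt
                  simp at hjt
                  omega
                obtain ⟨m, hm⟩ : ∃ m, t.length = m + 1 :=
                  ⟨t.length - 1, by cases t; exact absurd rfl htne; simp⟩
                -- w = w.take j ++ [c]
                have hsplit : w = w.take j ++ [c] := by
                  conv_lhs => rw [← List.take_append_drop j w]
                  rw [hdrop, hrest]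
                -- w.take j = (i,b₁) :: t.take m
                have htakej : w.take j = (i, true) :: t.take m := by
                  rw [hwc, hjt, hm, List.take_succ_cons, ← hb]
                have hc_eq : (c : Fin n × Bool) = (i, false) := by
                  obtain ⟨c1, c2⟩ := c
                  simp only at hc1 hcfalse
                  rw [hc1, hcfalse]
                calc (FreeGroup.of i)⁻¹ * u₀ * FreeGroup.of i
                    = (FreeGroup.of i)⁻¹ * (FreeGroup.mk (w.take j)
                        * (FreeGroup.mk [c] * FreeGroup.of i)) := by
                      rw [hu₀w]
                      conv_lhs => rw [hsplit]
                      rw [← FreeGroup.mul_mk]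
                      group
                  _ = (FreeGroup.of i)⁻¹ * FreeGroup.mk (w.take j) := by
                      rw [hc_eq, mk_singleton]
                      show _ * (_ * ((FreeGroup.of i)⁻¹ * FreeGroup.of i)) = _
                      rw [inv_mul_cancel, mul_one]
                  _ = FreeGroup.mk (t.take m) := by
                      rw [htakej, mk_cons]
                      show (FreeGroup.of i)⁻¹ * (FreeGroup.of i * _) = _
                      rw [← mul_assoc, inv_mul_cancel, one_mul]
                  _ = FreeGroup.mk (t.take (t.length - 1)) := by rw [hm]; simp
              have hvmem : (FreeGroup.of i)⁻¹ * u₀ * FreeGroup.of i ∈ N := by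
                have := hN.conj_mem u₀ hu₀ (FreeGroup.of i)⁻¹
                rwa [inv_inv] at this
              have hvne : (FreeGroup.of i)⁻¹ * u₀ * FreeGroup.of i ≠ 1 := by
                intro hcon
                apply hne
                have : u₀ = FreeGroup.of i * ((FreeGroup.of i)⁻¹ * u₀ * FreeGroup.of i)
                    * (FreeGroup.of i)⁻¹ := by group
                rw [hcon] at this
                rw [this]
                group
              have hlenv := hmin _ hvmem hvne
              rw [hveq, FreeGroup.toWord_mk] at hlenv
              have hred_le : (FreeGroup.reduce (t.take (t.length - 1))).length
                  ≤ (t.take (t.length - 1)).length :=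
                FreeGroup.Red.length_le (FreeGroup.reduce.red)
              have hlen_take : (t.take (t.length - 1)).length ≤ t.length - 1 := by
                rw [List.length_take]
                omega
              omega
      · rw [hterm, if_neg hc1]
        rfl
  -- conclude
  have hsum := Finset.sum_eq_single_of_mem (0 : ℕ) (Finset.mem_range.2 hk0)
      (fun j hj hj0 => hvanish j hj hj0)
  rw [MonoidAlgebra.coeff_sum, Finsupp.finset_sum_apply] at happ
  have h0val : (term π i w 0).coeff γ₀ = (if b₁ then 1 else -1 : ℤ) := by
    have h00 : term π i w 0 = if b₁ then MonoidAlgebra.single (π 1) 1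
        else -MonoidAlgebra.single (π (el ((i, b₁)))) 1 := by
      rw [hwc, term_zero_cons]
      rw [if_pos (show ((i, b₁) : Fin n × Bool).1 = i from rfl)]
    rw [h00]
    rcases Bool.eq_false_or_eq_true b₁ with hb | hb
    · rw [hb, if_pos rfl, if_pos rfl]
      have hgg : γ₀ = π 1 := by rw [hγ₀, hb, if_pos rfl, π.map_one]
      rw [hgg, MonoidAlgebra.coeff_single, Finsupp.single_eq_same]
    · rw [hb, if_neg Bool.false_ne_true, if_neg Bool.false_ne_true, MonoidAlgebra.coeff_neg, Finsupp.neg_apply]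
      have hgg : γ₀ = π (el ((i, b₁) : Fin n × Bool)) := by
        rw [hγ₀, hb, if_neg Bool.false_ne_true]
        all_goals rfl
      rw [← hb, hgg]
      all_goals rw [MonoidAlgebra.coeff_single, Finsupp.single_eq_same]
  have hfinal : (∑ j ∈ Finset.range k, (term π i w j).coeff γ₀) = (if b₁ then 1 else -1 : ℤ) := by
    rw [Finset.sum_eq_single_of_mem (0 : ℕ) (Finset.mem_range.2 hk0)
      (fun j hj hj0 => hvanish j hj hj0), h0val]
  rw [happ] at hfinal
  cases b₁ <;> simp at hfinal

end
end Stmt1Aux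

open Stmt1Aux in
/-- A non-abelian free group `F_n` (`n ≥ 2`) has no non-trivial finitely generated
normal subgroup of infinite index: such a subgroup must have finite index. -/
theorem stmt1 (n : ℕ) (hn : 2 ≤ n) (N : Subgroup (FreeGroup (Fin n))) [N.Normal]
    (hfg : N.FG) (hne : N ≠ ⊥) : N.FiniteIndex := by
  classical
  by_contra hcon
  have hidx : N.index = 0 := by
    by_contra h
    exact hcon ⟨h⟩
  have hinf : Infinite (FreeGroup (Fin n) ⧸ N) := by
    rw [Subgroup.index] at hidx
    rcases Nat.card_eq_zero.1 hidx with h | h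
    · exact (h.false (1 : FreeGroup (Fin n) ⧸ N)).elim
    · exact h
  -- minimal nontrivial element of N
  obtain ⟨u', hu'mem, hu'ne⟩ : ∃ u ∈ N, u ≠ 1 := by
    by_contra h
    push_neg at h
    exact hne ((Subgroup.eq_bot_iff_forall N).2 h)
  have hQ : ∃ m, ∃ u, u ∈ N ∧ u ≠ 1 ∧ u.toWord.length = m :=
    ⟨_, u', hu'mem, hu'ne, rfl⟩
  obtain ⟨u₀, hu₀, hu₀ne, hu₀len⟩ := Nat.find_spec hQ
  have hmin : ∀ v ∈ N, v ≠ 1 → u₀.toWord.length ≤ v.toWord.length := by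
    intro v hv hvne
    rw [hu₀len]
    exact Nat.find_min' hQ ⟨v, hv, hvne, rfl⟩
  obtain ⟨i, hdne⟩ := exists_d_ne_zero N u₀ hu₀ hu₀ne hmin
  set G' := FreeGroup (Fin n) ⧸ N with hG'
  set π := QuotientGroup.mk' N with hπ
  set D : MonoidAlgebra ℤ G' := d π i u₀ with hD
  -- the span of the Fox derivative image of N is finitely generated
  obtain ⟨T, hT⟩ := hfg
  set S : Submodule ℤ (MonoidAlgebra ℤ G') :=
    Submodule.span ℤ ((fun u => d π i u) '' (T : Set (FreeGroup (Fin n)))) with hS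
  have hdS : ∀ u ∈ N, d π i u ∈ S := by
    intro u hu
    rw [← hT] at hu
    refine Subgroup.closure_induction (fun x hx => ?_) ?_
      (fun x y hx hy hdx hdy => ?_) (fun x hx hdx => ?_) hu
    · exact Submodule.subset_span ⟨x, hx, rfl⟩
    · rw [d_one]; exact Submodule.zero_mem S
    · rw [d_mul_of_eq_one π i x y ((QuotientGroup.eq_one_iff x).2 (hT ▸ hx))]
      exact S.add_mem hdx hdy
    · rw [d_inv_of_eq_one π i x ((QuotientGroup.eq_one_iff x).2 (hT ▸ hx))]
      exact S.neg_mem hdx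
  have hNoeth : IsNoetherian ℤ S :=
    isNoetherian_of_fg_of_noetherian S
      (Submodule.fg_span (T.finite_toSet.image _))
  -- translates
  set K : Finset G' := D.coeff.support with hK
  have hKne : K.Nonempty := Finsupp.support_nonempty_iff.2 (mt MonoidAlgebra.coeff_eq_zero.1 hdne)
  set cov : G' → Finset G' := fun γ => K.image (fun x => γ * x) with hcov
  have exists_translate : ∀ B : Finset G', ∃ γ, ¬ cov γ ⊆ B := by
    intro B
    by_contra hfor
    push_neg at hfor
    obtain ⟨x₀, hx₀⟩ := hKne
    have hinj : Function.Injective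
        (fun γ : G' => (⟨γ * x₀, hfor γ (Finset.mem_image_of_mem _ hx₀)⟩ : {y // y ∈ B})) := by
      intro a b hab
      have := congrArg Subtype.val hab
      simpa using this
    haveI := hinf
    haveI := Finite.of_injective _ hinj
    exact not_finite G'
  set pick : Finset G' → G' := fun B => (exists_translate B).choose with hpickdef
  set Bs : ℕ → Finset G' := fun m => Nat.rec ∅ (fun _ B => B ∪ cov (pick B)) m with hBs
  set γs : ℕ → G' := fun m => pick (Bs m) with hγs
  have hpick : ∀ m, ¬ cov (γs m) ⊆ Bs m := fun m => (exists_translate (Bs m)).choose_spec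
  have hBs_succ : ∀ m, Bs (m+1) = Bs m ∪ cov (γs m) := fun m => rfl
  have hBs_mono : ∀ j m, j ≤ m → Bs j ⊆ Bs m := by
    intro j m hjm
    induction m with
    | zero =>
      have : j = 0 := Nat.le_zero.1 hjm
      rw [this]
    | succ m ih =>
      rcases Nat.lt_succ_iff_lt_or_eq.1 (Nat.lt_succ_of_le hjm) with h | h
      · exact (ih (Nat.lt_succ_iff.1 h)).trans
          (by rw [hBs_succ]; exact Finset.subset_union_left)
      · rw [h]
  have hcovBs : ∀ j m, j < m → cov (γs j) ⊆ Bs m := by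
    intro j m hjm
    have h1 : Bs (j+1) ⊆ Bs m := hBs_mono _ _ hjm
    exact (by rw [hBs_succ]; exact Finset.subset_union_right : cov (γs j) ⊆ Bs (j+1)).trans h1
  -- the linearly independent family
  set c : ℕ → MonoidAlgebra ℤ G' := fun m => MonoidAlgebra.single (γs m) 1 * D with hc
  have hc_mem : ∀ m, c m ∈ S := by
    intro m
    obtain ⟨g, hg⟩ := QuotientGroup.mk'_surjective N (γs m)
    have hconj := d_conj π i u₀ g ((QuotientGroup.eq_one_iff u₀).2 hu₀)
    have : c m = d π i (g * u₀ * g⁻¹) := by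
      rw [hconj, hc, hD, hg]
    rw [this]
    exact hdS _ (‹N.Normal›.conj_mem u₀ hu₀ g)
  have hli : LinearIndependent ℤ c := by
    rw [linearIndependent_iff']
    intro s q hsum j₀ hj₀
    by_contra hq0
    set s' := s.filter fun j => q j ≠ 0 with hs'
    have hs'ne : s'.Nonempty := ⟨j₀, Finset.mem_filter.2 ⟨hj₀, hq0⟩⟩
    set m := s'.max' hs'ne with hmdef
    have hm := s'.max'_mem hs'ne
    obtain ⟨hms, hqm⟩ := Finset.mem_filter.1 hm
    obtain ⟨x, hxcov, hxB⟩ := Finset.not_subset.1 (hpick m)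
    have h0 : (∑ j ∈ s, q j • c j).coeff x = 0 := by rw [hsum]; rfl
    rw [MonoidAlgebra.coeff_sum, Finsupp.finset_sum_apply] at h0
    have h1 : ∑ j ∈ s, q j * (c j).coeff x = 0 :=
      (Finset.sum_congr rfl fun j _ => by rw [MonoidAlgebra.coeff_smul, Finsupp.smul_apply, smul_eq_mul]).trans h0
    have hsingle : ∑ j ∈ s, q j * (c j).coeff x = q m * (c m).coeff x := by
      apply Finset.sum_eq_single_of_mem m hms
      intro j hj hjm
      by_cases hqj : q j = 0
      · rw [hqj, zero_mul]
      · have hjs' : j ∈ s' := Finset.mem_filter.2 ⟨hj, hqj⟩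
        have hjlt : j < m := lt_of_le_of_ne (Finset.le_max' s' j hjs') hjm
        have hcx : (c j).coeff x = 0 := by
          have hcj : c j = MonoidAlgebra.single (γs j) 1 * D := rfl
          rw [hcj, MonoidAlgebra.coeff_single_mul_apply, one_mul]
          apply Finsupp.notMem_support_iff.1
          intro hsup
          apply hxB
          apply hcovBs j m hjlt
          exact Finset.mem_image.2 ⟨_, hsup, by group⟩
        rw [hcx, mul_zero]
    obtain ⟨y, hyK, hyx⟩ := Finset.mem_image.1 hxcov
    have hcmx : (c m).coeff x ≠ 0 := by
      have hcm : c m = MonoidAlgebra.single (γs m) 1 * D := rfl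
      rw [hcm, MonoidAlgebra.coeff_single_mul_apply, one_mul]
      have hxy : (γs m)⁻¹ * x = y := by rw [← hyx]; group
      rw [hxy]
      exact Finsupp.mem_support_iff.1 hyK
    rw [hsingle] at h1
    rcases mul_eq_zero.1 h1 with h | h
    · exact hqm h
    · exact hcmx h
  have hliS : LinearIndependent ℤ (fun m => (⟨c m, hc_mem m⟩ : S)) := by
    apply LinearIndependent.of_comp S.subtype
    exact hli
  haveI := hNoeth
  haveI : Finite ℕ := hliS.finite_of_isNoetherian
  exact not_finite ℕ
end

section
/- If G is a finitely generated group such that in every finite quotient of G the relation h·g·h⁻¹ = g² holds for images of fixed elements g, h ∈ G, then the image of g is trivial in every finite quotient of G. -/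
lemma aux_m_dvd (m : ℕ) (hm : 0 < m) (hd : m ∣ 2 ^ m - 1) : m = 1 := by
  by_contra hne
  set p := m.minFac with hp
  have hpp : p.Prime := Nat.minFac_prime hne
  have hpd : p ∣ 2 ^ m - 1 := (Nat.minFac_dvd m).trans hd
  haveI : Fact p.Prime := ⟨hpp⟩
  have h1 : (1:ℕ) ≤ 2 ^ m := Nat.one_le_two_pow
  have hodd : ¬ (2 ∣ 2 ^ m - 1) := by
    intro h2
    have hdd : 2 ∣ 2 ^ m := dvd_pow_self 2 hm.ne'
    have h3 : (2:ℕ) ∣ 2 ^ m - (2 ^ m - 1) := Nat.dvd_sub hdd h2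
    have h4 : 2 ^ m - (2 ^ m - 1) = 1 := by omega
    rw [h4] at h3
    omega
  have hp2 : p ≠ 2 := by intro hpe; exact hodd (hpe ▸ hpd)
  have h2ne : (2 : ZMod p) ≠ 0 := by
    intro h
    have h2 : ((2:ℕ) : ZMod p) = 0 := by exact_mod_cast h
    have := (ZMod.natCast_eq_zero_iff 2 p).mp h2
    have h2le := hpp.two_le
    have := Nat.le_of_dvd (by norm_num) this
    omega
  have hpow : (2 : ZMod p) ^ m = 1 := by
    have hc : ((2 ^ m - 1 : ℕ) : ZMod p) = 0 := (ZMod.natCast_eq_zero_iff _ p).mpr hpd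
    rw [Nat.cast_sub h1] at hc
    push_cast at hc
    have := sub_eq_zero.mp hc
    simpa using this
  set d := orderOf (2 : ZMod p) with hdd
  have hdm : d ∣ m := orderOf_dvd_of_pow_eq_one hpow
  have hdp : d ∣ p - 1 := orderOf_dvd_of_pow_eq_one (ZMod.pow_card_sub_one_eq_one h2ne)
  have hd1 : d = 1 := by
    by_contra hdne
    have hq : d.minFac.Prime := Nat.minFac_prime hdne
    have hqm : d.minFac ∣ m := (Nat.minFac_dvd d).trans hdm
    have hge : p ≤ d.minFac := Nat.minFac_le_of_dvd hq.two_le hqm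
    have hdpos : 0 < d := by
      rcases Nat.eq_zero_or_pos d with h0 | h0
      · rw [h0] at hdm; simp at hdm; omega
      · exact h0
    have hle : d ≤ p - 1 := Nat.le_of_dvd (by have := hpp.two_le; omega) hdp
    have := Nat.minFac_le hdpos
    omega
  have h21 : (2 : ZMod p) = 1 := orderOf_eq_one_iff.mp hd1
  have h10 : (1 : ZMod p) = 0 := by linear_combination h21
  exact one_ne_zero h10

theorem stmt6aux {Q : Type} [Group Q] [Finite Q] (x y : Q) (hc : IsConj x y)
    (hr : y * x * y⁻¹ = x ^ 2) : x = 1 := by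
  have key : ∀ n : ℕ, y ^ n * x * (y ^ n)⁻¹ = x ^ (2 ^ n) := by
    intro n
    induction n with
    | zero => simp
    | succ n ih =>
      have h : y ^ (n+1) * x * (y ^ (n+1))⁻¹ = y * (y ^ n * x * (y ^ n)⁻¹) * y⁻¹ := by
        group
      rw [h, ih, ← conj_pow, hr, ← pow_mul, pow_succ, Nat.mul_comm]
  set n := orderOf y with hn
  have hnpos : 0 < n := orderOf_pos y
  have hx : x ^ (2 ^ n) = x := by
    have h := key n
    rw [pow_orderOf_eq_one, one_mul, inv_one, mul_one] at h
    exact h.symm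
  have hx1 : x ^ (2 ^ n - 1) = 1 := by
    have h1 : 1 ≤ 2 ^ n := Nat.one_le_two_pow
    have h2 : x ^ (2 ^ n - 1) * x = x ^ (2 ^ n) := by
      rw [← pow_succ]; congr 1; omega
    rw [hx] at h2
    exact mul_right_cancel (by rw [h2, one_mul])
  have hdvd : orderOf x ∣ 2 ^ n - 1 := orderOf_dvd_of_pow_eq_one hx1
  obtain ⟨c, hcc⟩ := hc
  have heq : orderOf x = n := hn ▸ SemiconjBy.orderOf_eq (↑c) hcc
  rw [heq] at hdvd
  have hone : n = 1 := aux_m_dvd n hnpos hdvd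
  have : orderOf x = 1 := by rw [heq, hone]
  exact orderOf_eq_one_iff.mp this


/-- Higman-type triviality: if `g` and `h` are conjugate elements of a finitely
generated group `G` and the relation `h g h⁻¹ = g²` holds in every finite quotient
of `G`, then the image of `g` is trivial in every finite quotient of `G`. -/
theorem stmt6 {G : Type*} [Group G] [Group.FG G] (g h : G) (hconj : IsConj g h)
    (hrel : ∀ (Q : Type) [Group Q] [Finite Q] (φ : G →* Q), Function.Surjective φ →
      φ h * φ g * (φ h)⁻¹ = (φ g) ^ 2) :
    ∀ (Q : Type) [Group Q] [Finite Q] (φ : G →* Q), Function.Surjective φ → φ g = 1 := by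
  intro Q _ _ φ hφ
  exact stmt6aux (φ g) (φ h) (φ.map_isConj hconj) (hrel Q φ hφ)
end

section
/- In a finite group Q, suppose x, y ∈ Q are conjugate and y·x·y⁻¹ = x². Then x = 1. -/
set_option maxHeartbeats 1000000

lemma aux_dvd_two_pow_sub_one {n : ℕ} (hn : 0 < n) (hd : n ∣ 2 ^ n - 1) : n = 1 := by
  by_contra hne
  set p := n.minFac with hp
  have hpp : p.Prime := Nat.minFac_prime hne
  have hpn : p ∣ n := Nat.minFac_dvd n
  haveI : Fact p.Prime := ⟨hpp⟩
  have h2dvd : 2 ∣ 2 ^ n := dvd_pow_self 2 hn.ne'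
  have h2le : 2 ≤ 2 ^ n := Nat.le_self_pow hn.ne' 2
  have hpodd : p ≠ 2 := by
    intro heq
    rw [heq] at hpn
    have : 2 ∣ 2 ^ n - 1 := hpn.trans hd
    omega
  have hcast : (2 : ZMod p) ^ n = 1 := by
    have hpd : p ∣ 2 ^ n - 1 := hpn.trans hd
    have : ((2 ^ n - 1 : ℕ) : ZMod p) = 0 := (ZMod.natCast_eq_zero_iff _ _).mpr hpd
    have h' : ((2 ^ n : ℕ) : ZMod p) - 1 = 0 := by
      push_cast [Nat.cast_sub (by omega : 1 ≤ 2 ^ n)] at this ⊢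
      exact this
    push_cast at h'
    linear_combination h'
  have h2ne : (2 : ZMod p) ≠ 0 := by
    intro hzero
    have := (ZMod.natCast_eq_zero_iff 2 p).mp (by exact_mod_cast hzero)
    exact hpodd ((Nat.prime_dvd_prime_iff_eq hpp Nat.prime_two).mp this)
  set k := orderOf (2 : ZMod p) with hk
  have hkn : k ∣ n := orderOf_dvd_of_pow_eq_one hcast
  have hkp : k ∣ p - 1 := by
    apply orderOf_dvd_of_pow_eq_one
    exact ZMod.pow_card_sub_one_eq_one h2ne
  have hkpos : 0 < k := by
    show 0 < orderOf (2 : ZMod p); exact orderOf_pos_iff.mpr (isOfFinOrder_iff_pow_eq_one.mpr ⟨n, hn, hcast⟩)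
  rcases eq_or_lt_of_le (Nat.succ_le_of_lt hkpos) with hk1 | hk1
  · -- k = 1, so 2 = 1 in ZMod p
    have : (2 : ZMod p) = 1 := orderOf_eq_one_iff.mp hk1.symm
    have : (1 : ZMod p) = 0 := by linear_combination this
    exact one_ne_zero this
  · -- k > 1: its min prime factor q divides n and q < p, contradiction
    set q := k.minFac with hq
    have hqp : q.Prime := Nat.minFac_prime (by omega)
    have hqn : q ∣ n := (Nat.minFac_dvd k).trans hkn
    have hple : p ≤ q := Nat.minFac_le_of_dvd hqp.two_le hqn
    have hqk : q ≤ k := Nat.minFac_le (by omega)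
    have hkle : k ≤ p - 1 := Nat.le_of_dvd (by have := hpp.two_le; omega) hkp
    omega

lemma aux_conj_pow {Q : Type*} [Group Q] (x y : Q) (h : y * x * y⁻¹ = x ^ 2) :
    ∀ n : ℕ, y ^ n * x * (y ^ n)⁻¹ = x ^ (2 ^ n) := by
  intro n
  induction n with
  | zero => simp
  | succ n ih =>
    have : y ^ (n + 1) * x * (y ^ (n + 1))⁻¹ = y * (y ^ n * x * (y ^ n)⁻¹) * y⁻¹ := by
      group
    rw [this, ih]
    have hc : ∀ m : ℕ, y * x ^ m * y⁻¹ = (y * x * y⁻¹) ^ m := by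
      intro m; exact (conj_pow ..).symm
    rw [hc, h, ← pow_mul]
    ring_nf

/-- In a finite group, if `x` and `y` are conjugate and `y x y⁻¹ = x²`, then `x = 1`. -/
theorem stmt7 {Q : Type*} [Group Q] [Finite Q] (x y : Q) (hconj : IsConj x y)
    (h : y * x * y⁻¹ = x ^ 2) : x = 1 := by
  set n := orderOf x with hn
  obtain ⟨c, hc⟩ := hconj
  have hoy : orderOf y = n := (SemiconjBy.orderOf_eq _ hc).symm
  have hnpos : 0 < n := orderOf_pos x
  have hx : x = x ^ (2 ^ n) := by
    have := aux_conj_pow x y h n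
    rw [← hoy, pow_orderOf_eq_one] at this
    rw [hoy] at this
    simpa using this
  have hpow : x ^ (2 ^ n - 1) = 1 := by
    have h1 : 1 ≤ 2 ^ n := Nat.one_le_two_pow
    have : x ^ (2 ^ n - 1) * x = x := by
      rw [← pow_succ, Nat.sub_add_cancel h1, ← hx]
    exact mul_right_cancel (by rw [this, one_mul])
  have hdvd : n ∣ 2 ^ n - 1 := orderOf_dvd_of_pow_eq_one hpow
  have := aux_dvd_two_pow_sub_one hnpos hdvd
  exact orderOf_eq_one_iff.mp this
end
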